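/- For any tower (X_n)_{n∈ω} of uniform spaces and any sequence (U_n)_{n∈ω} such that U_n is an entourage of X_n for every n, there exists a monotone sequence (d_n)_{n∈ω} of uniform pseudometrics (d_n a uniform pseudometric on X_n) such that {(x,y) ∈ X_n² : d_n(x,y) < 1} ⊆ U_n for every n ∈ ω. -/

import Mathlib

open Set Filter Topology

universe u

/-- A tower of uniform spaces on the ambient set `X`: an increasing sequence
`S 0 ⊆ S 1 ⊆ ⋯` of subsets covering `X`, each `S n` carrying a uniformity which is
the subspace uniformity inherited from `S (n+1)`. -/
structure UniformTower (X : Type u) where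
  S : ℕ → Set X
  mono : Monotone S
  iUnion_eq : ⋃ n, S n = Set.univ
  u : (n : ℕ) → UniformSpace (S n)
  compat : ∀ n, u n = UniformSpace.comap (Set.inclusion (mono (Nat.le_succ n))) (u (n + 1))

namespace UniformTower

variable {X : Type u} (T : UniformTower X)

/-- The uniform direct limit: the strongest (finest) uniformity on `X` making all
the identity inclusions `S n → X` uniformly continuous. -/
noncomputable def dirLim : UniformSpace X :=
  sInf {u' : UniformSpace X |
    ∀ n, @UniformContinuous _ _ (T.u n) u' (Subtype.val : T.S n → X)}

/-- The height `|x| = min {n : x ∈ S n}` of a point of `X`. -/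
noncomputable def height (x : X) : ℕ := sInf {n | x ∈ T.S n}

lemma mem_S_height (x : X) : x ∈ T.S (T.height x) := by
  have hx : x ∈ ⋃ n, T.S n := T.iUnion_eq ▸ Set.mem_univ x
  rcases Set.mem_iUnion.mp hx with ⟨n, hn⟩
  exact Nat.sInf_mem ⟨n, show n ∈ {m | x ∈ T.S m} from hn⟩

/-- Given a sequence of pseudometrics `d n` on the stages `S n`, the distance
`d_{|x,y|}(x,y)` where `|x,y| = max (|x|, |y|)`. -/
noncomputable def chainD (d : (n : ℕ) → T.S n → T.S n → ℝ) (x y : X) : ℝ :=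
  d (max (T.height x) (T.height y))
    ⟨x, T.mono (le_max_left _ _) (T.mem_S_height x)⟩
    ⟨y, T.mono (le_max_right _ _) (T.mem_S_height y)⟩

/-- The limit pseudometric `lim d_n` of a sequence of pseudometrics:
`lim d_n (x,y) = inf { Σ_{i=1}^m d_{|x_{i-1},x_i|}(x_{i-1},x_i) : x = x_0, x_1, …, x_m = y }`. -/
noncomputable def limD (d : (n : ℕ) → T.S n → T.S n → ℝ) (x y : X) : ℝ :=
  sInf {r : ℝ | ∃ (m : ℕ) (c : ℕ → X), c 0 = x ∧ c m = y ∧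
    r = ∑ i ∈ Finset.range m, T.chainD d (c i) (c (i + 1))}

/-- A sequence of pseudometrics on the stages of the tower is monotone if
`d n ≤ d (n+1)` on `S n × S n`. -/
def MonotoneSeq (d : (n : ℕ) → T.S n → T.S n → ℝ) : Prop :=
  ∀ n (x y : T.S n),
    d n x y ≤ d (n + 1) (Set.inclusion (T.mono (Nat.le_succ n)) x)
      (Set.inclusion (T.mono (Nat.le_succ n)) y)

end UniformTower

/-- `d` is a pseudometric: it vanishes on the diagonal, is symmetric and satisfies
the triangle inequality. -/
def IsPseudometric {α : Type*} (d : α → α → ℝ) : Prop :=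
  (∀ x, d x x = 0) ∧ (∀ x y, d x y = d y x) ∧ (∀ x y z, d x z ≤ d x y + d y z)

/-- `d` is a uniform pseudometric on the uniform space `(α, u)`:
for every `ε > 0` the set `{d < ε}` is an entourage. -/
def IsUniformPseudometric {α : Type*} (u : UniformSpace α) (d : α → α → ℝ) : Prop :=
  IsPseudometric d ∧ ∀ ε : ℝ, 0 < ε → {p : α × α | d p.1 p.2 < ε} ∈ @uniformity α u


open Uniformity
open scoped SetRel

section AuxLemmas



def IsPseudometric' {α : Type*} (d : α → α → ℝ) : Prop :=
  (∀ x, d x x = 0) ∧ (∀ x y, d x y = d y x) ∧ (∀ x y z, d x z ≤ d x y + d y z)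

lemma IsPseudometric'.nonneg {α : Type*} {d : α → α → ℝ} (h : IsPseudometric' d)
    (x y : α) : 0 ≤ d x y := by
  have := h.2.2 x y x
  rw [h.1 x, h.2.1 y x] at this
  linarith

/-- chain of entourages -/
lemma exists_entourage_chain {Y : Type*} (u : UniformSpace Y) {W : Set (Y × Y)}
    (hW : W ∈ 𝓤[u]) :
    ∃ V : ℕ → Set (Y × Y), (∀ k, V k ∈ 𝓤[u]) ∧ (∀ k, SetRel.IsSymm (V k)) ∧
      (∀ k, V (k + 1) ○ V (k + 1) ⊆ V k) ∧ V 0 ⊆ W := by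
  letI := u
  classical
  choose! next hmem hsym hcomp using
    fun (s : Set (Y × Y)) (hs : s ∈ 𝓤 Y) => comp_symm_mem_uniformity_sets hs
  obtain ⟨V0, hV0, hV0s, hV0c⟩ := comp_symm_mem_uniformity_sets hW
  have hV0W : V0 ⊆ W := (subset_comp_self_of_mem_uniformity hV0).trans hV0c
  refine ⟨fun k => Nat.rec V0 (fun _ s => next s) k, ?_, ?_, ?_, hV0W⟩
  · intro k; induction k with
    | zero => exact hV0
    | succ m ih => exact hmem _ ih
  · intro k; induction k with
    | zero => exact hV0s
    | succ m ih =>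
      have : Nat.rec V0 (fun _ s => next s) m ∈ 𝓤 Y := by
        clear ih; induction m with
        | zero => exact hV0
        | succ l ihl => exact hmem _ ihl
      exact hsym _ this
  · intro k
    have : Nat.rec V0 (fun _ s => next s) k ∈ 𝓤 Y := by
      induction k with
      | zero => exact hV0
      | succ l ihl => exact hmem _ ihl
    exact hcomp _ this

/-- Lemma B: every entourage contains a small ball of a uniform pseudometric. -/
lemma exists_uniform_pseudometric_subset {Y : Type*} (u : UniformSpace Y) {W : Set (Y × Y)}
    (hW : W ∈ 𝓤[u]) :
    ∃ ρ : Y → Y → ℝ, (IsPseudometric' ρ ∧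
        ∀ ε : ℝ, 0 < ε → {p : Y × Y | ρ p.1 p.2 < ε} ∈ 𝓤[u]) ∧
      ∃ δ : ℝ, 0 < δ ∧ {p : Y × Y | ρ p.1 p.2 < δ} ⊆ W := by
  obtain ⟨V, hVmem, hVsym, hVcomp, hV0⟩ := exists_entourage_chain u hW
  have hVk : ∀ k, V k ∈ (⨅ k, 𝓟 (V k) : Filter (Y × Y)) :=
    fun k => mem_iInf_of_mem k (mem_principal_self _)
  have hanti : Antitone V := by
    refine antitone_nat_of_succ_le fun k => ?_
    intro p hp
    exact hVcomp k ⟨p.1, @refl_mem_uniformity Y u _ _ (hVmem (k+1)), hp⟩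
  have hdir : Directed (· ≥ ·) V := hanti.directed_ge
  have hbasis : (⨅ k, 𝓟 (V k) : Filter (Y × Y)).HasBasis (fun _ => True) V :=
    hasBasis_iInf_principal hdir
  have memF : ∀ {r : Set (Y × Y)}, r ∈ (⨅ k, 𝓟 (V k) : Filter (Y × Y)) → ∃ k, V k ⊆ r := by
    intro r hr
    rcases hbasis.mem_iff.1 hr with ⟨k, -, hk⟩
    exact ⟨k, hk⟩
  set core : UniformSpace.Core Y := UniformSpace.Core.mk' (⨅ k, 𝓟 (V k))
    (by
      intro r hr x
      rcases memF hr with ⟨k, hk⟩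
      exact hk (@refl_mem_uniformity Y u _ _ (hVmem k)))
    (by
      intro r hr
      rcases memF hr with ⟨k, hk⟩
      refine mem_of_superset (hVk k) ?_
      haveI := hVsym k
      exact fun p hp => hk (SetRel.symm (R := V k) hp))
    (by
      intro r hr
      rcases memF hr with ⟨k, hk⟩
      exact ⟨V (k + 1), hVk (k + 1), (hVcomp k).trans hk⟩) with hcore
  letI u' : UniformSpace Y := UniformSpace.ofCore core
  have hu' : 𝓤[u'] = (⨅ k, 𝓟 (V k) : Filter (Y × Y)) := rfl
  haveI hcg : IsCountablyGenerated 𝓤[u'] := by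
    rw [hu']; exact hbasis.isCountablyGenerated
  obtain ⟨I, hI⟩ := @UniformSpace.metrizable_uniformity Y u' hcg
  have hle : 𝓤[u] ≤ 𝓤[u'] := by
    rw [hu']; exact le_iInf fun k => le_principal_iff.2 (hVmem k)
  refine ⟨fun x y => @dist Y I.toDist x y,
    ⟨⟨fun x => I.dist_self x, fun x y => I.dist_comm x y, fun x y z => I.dist_triangle x y z⟩,
      ?_⟩, ?_⟩
  · intro ε hε
    have : {p : Y × Y | @dist Y I.toDist p.1 p.2 < ε} ∈ @uniformity Y I.toUniformSpace :=
      @Metric.dist_mem_uniformity Y I ε hε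
    rw [hI] at this
    exact hle this
  · have hWu' : W ∈ @uniformity Y I.toUniformSpace := by
      rw [hI, hu']
      exact mem_of_superset (hVk 0) hV0
    rcases (@Metric.mem_uniformity_dist Y I W).1 hWu' with ⟨δ, hδ, h⟩
    exact ⟨δ, hδ, fun p hp => h hp⟩
/-- min of a nonneg cap and a (nonneg-scaled) pseudometric is a pseudometric. -/
lemma isPseudometric'_min_scale {α : Type*} {d : α → α → ℝ} (hd : IsPseudometric' d)
    {c a : ℝ} (hc : 0 ≤ c) (ha : 0 ≤ a) :
    IsPseudometric' (fun x y => min c (a * d x y)) := by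
  refine ⟨fun x => by simp [hd.1 x, hc], fun x y => by
    show min c (a * d x y) = min c (a * d y x); rw [hd.2.1 x y], fun x y z => ?_⟩
  show min c (a * d x z) ≤ min c (a * d x y) + min c (a * d y z)
  rcases le_or_gt c (a * d x y) with h1 | h1
  · have : (0:ℝ) ≤ min c (a * d y z) := le_min hc (mul_nonneg ha (hd.nonneg y z))
    calc min c (a * d x z) ≤ c := min_le_left _ _
      _ ≤ min c (a * d x y) + min c (a * d y z) := by rw [min_eq_left h1]; linarith
  rcases le_or_gt c (a * d y z) with h2 | h2
  · have : (0:ℝ) ≤ min c (a * d x y) := le_min hc (mul_nonneg ha (hd.nonneg x y))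
    calc min c (a * d x z) ≤ c := min_le_left _ _
      _ ≤ min c (a * d x y) + min c (a * d y z) := by rw [min_eq_left h2]; linarith
  · rw [min_eq_right h1.le, min_eq_right h2.le]
    calc min c (a * d x z) ≤ a * d x z := min_le_right _ _
      _ ≤ a * (d x y + d y z) := by
          have := hd.2.2 x y z
          nlinarith [hd.nonneg x z]
      _ = a * d x y + a * d y z := by ring

/-- Lemma A: a bounded uniform pseudometric on a subspace (given via `comap ι`) is dominated
by a uniform pseudometric on the whole space, bounded by `2 * B`. -/
lemma exists_dominating {A Y : Type*} (u : UniformSpace Y) (ι : A → Y)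
    {d : A → A → ℝ} {B : ℝ} (hB : 0 < B)
    (hd1 : IsPseudometric' d)
    (hd2 : ∀ ε : ℝ, 0 < ε → {p : A × A | d p.1 p.2 < ε} ∈ 𝓤[u.comap ι])
    (hdB : ∀ x y, d x y ≤ B)
    (hBsub : ∀ {W : Set (Y × Y)}, W ∈ 𝓤[u] →
      ∃ ρ : Y → Y → ℝ, (IsPseudometric' ρ ∧
          ∀ ε : ℝ, 0 < ε → {p : Y × Y | ρ p.1 p.2 < ε} ∈ 𝓤[u]) ∧
        ∃ δ : ℝ, 0 < δ ∧ {p : Y × Y | ρ p.1 p.2 < δ} ⊆ W) :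
    ∃ g : Y → Y → ℝ, (IsPseudometric' g ∧
        ∀ ε : ℝ, 0 < ε → {p : Y × Y | g p.1 p.2 < ε} ∈ 𝓤[u]) ∧
      (∀ x y, g x y ≤ 2 * B) ∧ ∀ x y, d x y ≤ g (ι x) (ι y) := by
  classical
  -- entourages controlling d at scale B * 2⁻¹ ^ k
  have hWk : ∀ k : ℕ, ∃ W ∈ 𝓤[u], Prod.map ι ι ⁻¹' W ⊆ {p : A × A | d p.1 p.2 < B * 2⁻¹ ^ k} := by
    intro k
    have hmem := hd2 (B * 2⁻¹ ^ k) (mul_pos hB (by positivity))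
    rw [show 𝓤[u.comap ι] = comap (Prod.map ι ι) 𝓤[u] from rfl, mem_comap] at hmem
    exact hmem
  choose W hWmem hWsub using hWk
  choose ρ hρ δ hδ hρδ using fun k => hBsub (hWmem k)
  set c : ℕ → ℝ := fun k => 2 * B * 2⁻¹ ^ k with hc
  have hcpos : ∀ k, 0 < c k := fun k => by positivity
  set G : ℕ → Y → Y → ℝ := fun k x y => min (c k) (c k / δ k * ρ k x y) with hG
  have hGpm : ∀ k, IsPseudometric' (G k) := fun k =>
    isPseudometric'_min_scale (hρ k).1 (hcpos k).le (div_nonneg (hcpos k).le (hδ k).le)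
  have hGle : ∀ k x y, G k x y ≤ c k := fun k x y => min_le_left _ _
  have hGnn : ∀ k x y, 0 ≤ G k x y := fun k x y => (hGpm k).nonneg x y
  have hub : ∀ (k : ℕ) (x y : Y), G k x y ≤ 2 * B := by
    intro k x y
    calc G k x y ≤ c k := hGle k x y
      _ ≤ 2 * B := by
          rw [hc]
          have : (2:ℝ)⁻¹ ^ k ≤ 1 := pow_le_one₀ (by norm_num) (by norm_num)
          nlinarith
  have hbdd : ∀ x y, BddAbove (Set.range fun k => G k x y) := by
    intro x y
    refine ⟨2 * B, ?_⟩
    rintro r ⟨k, rfl⟩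
    exact hub k x y
  refine ⟨fun x y => ⨆ k, G k x y, ⟨⟨?_, ?_, ?_⟩, ?_⟩, ?_, ?_⟩
  · intro x
    have : ∀ k, G k x x = 0 := fun k => (hGpm k).1 x
    simp [this]
  · intro x y
    have : ∀ k, G k x y = G k y x := fun k => (hGpm k).2.1 x y
    simp [this]
  · intro x y z
    refine ciSup_le fun k => ?_
    calc G k x z ≤ G k x y + G k y z := (hGpm k).2.2 x y z
      _ ≤ (⨆ j, G j x y) + ⨆ j, G j y z :=
          add_le_add (le_ciSup (hbdd x y) k) (le_ciSup (hbdd y z) k)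
  · -- uniformity
    intro ε hε
    obtain ⟨K, hK⟩ : ∃ K : ℕ, (2:ℝ)⁻¹ ^ K < ε / (2 * (2 * B)) :=
      exists_pow_lt_of_lt_one (by positivity) (by norm_num)
    have hcK : ∀ k ≥ K, c k < ε / 2 := by
      intro k hk
      have h1 : (2:ℝ)⁻¹ ^ k ≤ 2⁻¹ ^ K :=
        pow_le_pow_of_le_one (by norm_num) (by norm_num) hk
      have : c k ≤ 2 * B * 2⁻¹ ^ K := by
        rw [hc]; nlinarith
      calc c k ≤ 2 * B * 2⁻¹ ^ K := this
        _ < 2 * B * (ε / (2 * (2 * B))) := by nlinarith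
        _ = ε / 2 := by field_simp
    have hE : (⋂ k ∈ Finset.range K, {p : Y × Y | ρ k p.1 p.2 < ε / 2 * δ k / c k}) ∈ 𝓤[u] := by
      refine (Filter.biInter_finset_mem _).2 fun k _ => ?_
      exact (hρ k).2 _ (div_pos (mul_pos (half_pos hε) (hδ k)) (hcpos k))
    refine mem_of_superset hE ?_
    rintro ⟨x, y⟩ hxy
    simp only [Set.mem_iInter, Set.mem_setOf_eq] at hxy ⊢
    have hall : ∀ k, G k x y ≤ ε / 2 := by
      intro k
      rcases lt_or_ge k K with hk | hk
      · have hr := hxy k (Finset.mem_range.2 hk)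
        have hδ' : δ k ≠ 0 := (hδ k).ne'
        have hc' : c k ≠ 0 := (hcpos k).ne'
        calc G k x y ≤ c k / δ k * ρ k x y := min_le_right _ _
          _ ≤ c k / δ k * (ε / 2 * δ k / c k) := by
              have h9 : 0 ≤ c k / δ k := div_nonneg (hcpos k).le (hδ k).le
              exact mul_le_mul_of_nonneg_left hr.le h9
          _ = ε / 2 := by field_simp
      · exact (hGle k x y).trans (hcK k hk).le
    calc (⨆ k, G k x y) ≤ ε / 2 := ciSup_le hall
      _ < ε := by linarith
  · -- bound
    intro x y
    exact ciSup_le fun k => hub k x y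
  · -- domination
    intro x y
    rcases le_or_gt (d x y) 0 with h0 | h0
    · exact h0.trans ((hGnn 0 _ _).trans (le_ciSup (hbdd _ _) 0))
    have hex : ∃ k : ℕ, B * 2⁻¹ ^ k < d x y := by
      obtain ⟨k, hk⟩ : ∃ k : ℕ, (2:ℝ)⁻¹ ^ k < d x y / B :=
        exists_pow_lt_of_lt_one (by positivity) (by norm_num)
      exact ⟨k, by rw [show B * 2⁻¹ ^ k = 2⁻¹ ^ k * B by ring]; exact (lt_div_iff₀ hB).1 hk⟩
    have hk0 : ¬ (B * 2⁻¹ ^ (0:ℕ) < d x y) := by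
      simp only [pow_zero, mul_one, not_lt]; exact hdB x y
    obtain ⟨k, hklt, hmin'⟩ : ∃ k, B * 2⁻¹ ^ k < d x y ∧ ∀ j < k, ¬ B * 2⁻¹ ^ j < d x y :=
      ⟨Nat.find hex, Nat.find_spec hex, fun j hj => Nat.find_min hex hj⟩
    have hkne : k ≠ 0 := by
      intro h
      rw [h] at hklt
      exact hk0 hklt
    obtain ⟨m, hm⟩ : ∃ m, k = m + 1 := ⟨k - 1, (Nat.succ_pred_eq_of_pos (Nat.pos_of_ne_zero hkne)).symm⟩
    have hmin : d x y ≤ B * 2⁻¹ ^ m := not_lt.1 (hmin' m (by omega))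
    have hdc : d x y ≤ c k := by
      rw [hc, hm]
      calc d x y ≤ B * 2⁻¹ ^ m := hmin
        _ = 2 * B * 2⁻¹ ^ (m + 1) := by ring
    -- (ι x, ι y) ∉ W k
    have hnW : (ι x, ι y) ∉ W k := by
      intro hmem
      have : d x y < B * 2⁻¹ ^ k := hWsub k (show Prod.map ι ι (x, y) ∈ W k from hmem)
      linarith
    have hρk : δ k ≤ ρ k (ι x) (ι y) := by
      by_contra h
      push_neg at h
      exact hnW (hρδ k h)
    have : c k ≤ G k (ι x) (ι y) := by
      refine le_min le_rfl ?_
      have h1 : c k / δ k * δ k ≤ c k / δ k * ρ k (ι x) (ι y) :=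
        mul_le_mul_of_nonneg_left hρk (div_nonneg (hcpos k).le (hδ k).le)
      have h2 : c k / δ k * δ k = c k := div_mul_cancel₀ _ (hδ k).ne'
      linarith
    exact hdc.trans (this.trans (le_ciSup (hbdd _ _) k))

lemma isUniformPseudometric_min_scale' {α : Type*} (u : UniformSpace α) {ρ : α → α → ℝ}
    (h : IsPseudometric' ρ ∧ ∀ ε : ℝ, 0 < ε → {p : α × α | ρ p.1 p.2 < ε} ∈ 𝓤[u])
    {c a : ℝ} (hc : 0 ≤ c) (ha : 0 < a) :
    IsPseudometric' (fun x y => min c (a * ρ x y)) ∧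
      ∀ ε : ℝ, 0 < ε → {p : α × α | min c (a * ρ p.1 p.2) < ε} ∈ 𝓤[u] := by
  refine ⟨isPseudometric'_min_scale h.1 hc ha.le, fun ε hε => ?_⟩
  refine mem_of_superset (h.2 (ε / a) (by positivity)) ?_
  intro p hp
  simp only [Set.mem_setOf_eq] at hp ⊢
  have h1 : a * ρ p.1 p.2 < ε := by
    have := mul_lt_mul_of_pos_left hp ha
    rwa [mul_div_cancel₀ _ ha.ne'] at this
  exact (min_le_right _ _).trans_lt h1

lemma isUniformPseudometric_max' {α : Type*} (u : UniformSpace α) {d e : α → α → ℝ}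
    (hd : IsPseudometric' d ∧ ∀ ε : ℝ, 0 < ε → {p : α × α | d p.1 p.2 < ε} ∈ 𝓤[u])
    (he : IsPseudometric' e ∧ ∀ ε : ℝ, 0 < ε → {p : α × α | e p.1 p.2 < ε} ∈ 𝓤[u]) :
    IsPseudometric' (fun x y => max (d x y) (e x y)) ∧
      ∀ ε : ℝ, 0 < ε → {p : α × α | max (d p.1 p.2) (e p.1 p.2) < ε} ∈ 𝓤[u] := by
  constructor
  · refine ⟨fun x => by simp [hd.1.1 x, he.1.1 x], fun x y => by
      show max (d x y) (e x y) = max (d y x) (e y x); rw [hd.1.2.1 x y, he.1.2.1 x y],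
      fun x y z => ?_⟩
    show max (d x z) (e x z) ≤ max (d x y) (e x y) + max (d y z) (e y z)
    refine max_le ((hd.1.2.2 x y z).trans ?_) ((he.1.2.2 x y z).trans ?_)
    · exact add_le_add (le_max_left _ _) (le_max_left _ _)
    · exact add_le_add (le_max_right _ _) (le_max_right _ _)
  · intro ε hε
    refine mem_of_superset (inter_mem (hd.2 ε hε) (he.2 ε hε)) ?_
    rintro p ⟨h1, h2⟩
    simp only [Set.mem_setOf_eq] at h1 h2 ⊢
    exact max_lt h1 h2

lemma isPseudometric_iff' {α : Type*} (d : α → α → ℝ) :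
    IsPseudometric d ↔ IsPseudometric' d := Iff.rfl

end AuxLemmas

/-- For any tower `(X_n)` of uniform spaces and any sequence `(U_n)` of entourages
(`U_n` an entourage of `X_n`), there exists a monotone sequence `(d_n)` of uniform
pseudometrics with `{d_n < 1} ⊆ U_n` for every `n`. -/
theorem statement8 {X : Type u} (T : UniformTower X)
    (U : (n : ℕ) → Set (T.S n × T.S n))
    (hU : ∀ n, U n ∈ @uniformity _ (T.u n)) :
    ∃ d : (n : ℕ) → T.S n → T.S n → ℝ,
      (∀ n, IsUniformPseudometric (T.u n) (d n)) ∧ T.MonotoneSeq d ∧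
      ∀ n, {p : T.S n × T.S n | d n p.1 p.2 < 1} ⊆ U n := by
  classical
  have base : ∀ n, ∃ e : T.S n → T.S n → ℝ,
      IsUniformPseudometric (T.u n) e ∧ (∀ x y, e x y ≤ 1) ∧
      {p : T.S n × T.S n | e p.1 p.2 < 1} ⊆ U n := by
    intro n
    obtain ⟨ρ, hρ, δ, hδ, hsub⟩ := exists_uniform_pseudometric_subset (T.u n) (hU n)
    refine ⟨fun x y => min 1 (δ⁻¹ * ρ x y),
      isUniformPseudometric_min_scale' (T.u n) hρ zero_le_one (by positivity),
      fun x y => min_le_left _ _, ?_⟩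
    intro p hp
    simp only [Set.mem_setOf_eq] at hp
    rcases lt_or_ge (δ⁻¹ * ρ p.1 p.2) 1 with h | h
    · refine hsub ?_
      show ρ p.1 p.2 < δ
      have h2 : δ * (δ⁻¹ * ρ p.1 p.2) < δ * 1 := mul_lt_mul_of_pos_left h hδ
      rwa [mul_one, ← mul_assoc, mul_inv_cancel₀ hδ.ne', one_mul] at h2
    · rw [min_eq_left h] at hp
      exact absurd hp (lt_irrefl 1)
  have step : ∀ n (e : T.S n → T.S n → ℝ),
      (IsUniformPseudometric (T.u n) e ∧ ∃ B, 0 < B ∧ ∀ x y, e x y ≤ B) →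
      ∃ e' : T.S (n + 1) → T.S (n + 1) → ℝ,
        (IsUniformPseudometric (T.u (n + 1)) e' ∧ ∃ B, 0 < B ∧ ∀ x y, e' x y ≤ B) ∧
        ({p : T.S (n + 1) × T.S (n + 1) | e' p.1 p.2 < 1} ⊆ U (n + 1)) ∧
        ∀ x y : T.S n, e x y ≤ e' (Set.inclusion (T.mono (Nat.le_succ n)) x)
          (Set.inclusion (T.mono (Nat.le_succ n)) y) := by
    rintro n e ⟨he, B, hB, heB⟩
    have he2 : ∀ ε : ℝ, 0 < ε → {p : T.S n × T.S n | e p.1 p.2 < ε} ∈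
        𝓤[(T.u (n + 1)).comap (Set.inclusion (T.mono (Nat.le_succ n)))] := by
      intro ε hε
      have h := he.2 ε hε
      rwa [T.compat n] at h
    obtain ⟨g, hg, hgB, hgd⟩ := exists_dominating (T.u (n + 1))
      (Set.inclusion (T.mono (Nat.le_succ n))) hB he.1 he2 heB
      (fun hW => exists_uniform_pseudometric_subset _ hW)
    obtain ⟨e1, he1, he1b, he1U⟩ := base (n + 1)
    refine ⟨fun x y => max (e1 x y) (g x y),
      ⟨isUniformPseudometric_max' _ he1 hg, 2 * B + 1, by linarith, fun x y => ?_⟩, ?_, ?_⟩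
    · exact max_le (by linarith [he1b x y]) (by linarith [hgB x y])
    · intro p hp
      simp only [Set.mem_setOf_eq] at hp
      exact he1U (show e1 p.1 p.2 < 1 from (le_max_left _ _).trans_lt hp)
    · intro x y
      exact (hgd x y).trans (le_max_right _ _)
  choose! step' hstep1 hstep2 hstep3 using step
  obtain ⟨e0, he0, he0b, he0U⟩ := base 0
  have hGood : ∀ n, IsUniformPseudometric (T.u n) ((fun n => Nat.rec e0 (fun m d => step' m d) n : (n : ℕ) → T.S n → T.S n → ℝ) n) ∧
      ∃ B, 0 < B ∧ ∀ x y, (fun n => Nat.rec e0 (fun m d => step' m d) n : (n : ℕ) → T.S n → T.S n → ℝ) n x y ≤ B := by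
    intro n
    induction n with
    | zero => exact ⟨he0, 1, one_pos, he0b⟩
    | succ m ih => exact hstep1 m _ ih
  refine ⟨fun n => Nat.rec e0 (fun m d => step' m d) n, fun n => (hGood n).1, ?_, ?_⟩
  · intro n x y
    exact hstep3 n _ (hGood n) x y
  · intro n
    cases n with
    | zero => exact he0U
    | succ m => exact hstep2 m _ (hGood m)
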